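/- For each C-self-adjoint extension à of a densely defined closed C-symmetric operator A, the codimension of D(Ã) in D(CA*C) equals the dimension of D(Ã)/D(A): dim(D(CA*C)/D(Ã)) = dim(D(Ã)/D(A)). -/

import Mathlib

open scoped InnerProductSpace
open LinearPMap

variable {H : Type*} [NormedAddCommGroup H] [InnerProductSpace ℂ H]

/-- A conjugation on a complex inner product space: a conjugate-linear involution
satisfying `⟪Cx, Cy⟫ = ⟪y, x⟫`. -/
structure Conjugation (H : Type*) [NormedAddCommGroup H] [InnerProductSpace ℂ H] where
  toFun : H → H
  map_add' : ∀ x y, toFun (x + y) = toFun x + toFun y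
  map_smulc : ∀ (c : ℂ) (x : H), toFun (c • x) = (starRingEnd ℂ c) • toFun x
  invol : ∀ x, toFun (toFun x) = x
  inner_conj : ∀ x y, ⟪toFun x, toFun y⟫_ℂ = ⟪y, x⟫_ℂ

namespace Conjugation

instance : CoeFun (Conjugation H) fun _ => H → H := ⟨toFun⟩

lemma map_zero (C : Conjugation H) : C 0 = 0 := by
  have := C.map_smulc 0 0; simpa using this

lemma mem_of_mem_image (C : Conjugation H) {S : Set H} {x : H} (hx : x ∈ C.toFun '' S) :
    C x ∈ S := by
  obtain ⟨t, ht, rfl⟩ := hx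
  rwa [C.invol]

/-- The image `C(D)` of a subspace under a conjugation, as a subspace. -/
def conjDomain (C : Conjugation H) (D : Submodule ℂ H) : Submodule ℂ H where
  carrier := C.toFun '' (D : Set H)
  add_mem' := by
    rintro a b ⟨x, hx, rfl⟩ ⟨y, hy, rfl⟩
    exact ⟨x + y, D.add_mem hx hy, (C.map_add' x y).symm ▸ rfl⟩
  zero_mem' := ⟨0, D.zero_mem, C.map_zero⟩
  smul_mem' := by
    rintro c a ⟨x, hx, rfl⟩
    refine ⟨(starRingEnd ℂ c) • x, D.smul_mem _ hx, ?_⟩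
    rw [C.map_smulc]; simp

lemma conj_mem (C : Conjugation H) {D : Submodule ℂ H} {x : H} (hx : x ∈ C.conjDomain D) :
    C x ∈ D := C.mem_of_mem_image hx

/-- The operator `C T C` with domain `C(D(T))`. -/
noncomputable def conjOp (C : Conjugation H) (T : H →ₗ.[ℂ] H) : H →ₗ.[ℂ] H where
  domain := C.conjDomain T.domain
  toFun :=
  { toFun := fun x => C (T ⟨C ↑x, C.conj_mem x.2⟩)
    map_add' := by
      intro x y
      have h : (⟨C ↑(x + y), C.conj_mem (x + y).2⟩ : T.domain)
          = ⟨C ↑x, C.conj_mem x.2⟩ + ⟨C ↑y, C.conj_mem y.2⟩ := by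
        apply Subtype.ext; simp [C.map_add']
      try dsimp only
      rw [h, T.map_add, C.map_add']
    map_smul' := by
      intro c x
      have h : (⟨C ↑(c • x), C.conj_mem (c • x).2⟩ : T.domain)
          = (starRingEnd ℂ c) • (⟨C ↑x, C.conj_mem x.2⟩ : T.domain) := by
        apply Subtype.ext; simp [C.map_smulc]
      try dsimp only
      rw [h, T.map_smul, C.map_smulc]; simp }

/-- `A` is `C`-symmetric: `CAC ⊆ A*`. -/
noncomputable def IsCSymmetric [CompleteSpace H] (C : Conjugation H) (A : H →ₗ.[ℂ] H) : Prop :=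
  C.conjOp A ≤ A†

/-- `A` is `C`-self-adjoint: `CAC = A*`. -/
noncomputable def IsCSelfAdjoint [CompleteSpace H] (C : Conjugation H) (A : H →ₗ.[ℂ] H) : Prop :=
  C.conjOp A = A†

end Conjugation
variable [CompleteSpace H]

open scoped InnerProductSpace in
/-- The kernel `N(I + A*CA*C)`. -/
noncomputable def kerIplusAstarCAstarC (C : Conjugation H) (A : H →ₗ.[ℂ] H) : Set H :=
  {g | ∃ hg : g ∈ (C.conjOp (A†)).domain, ∃ h2 : (C.conjOp (A†)) ⟨g, hg⟩ ∈ (A†).domain,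
      g + A† ⟨(C.conjOp (A†)) ⟨g, hg⟩, h2⟩ = 0}

/-- The kernel `N(I + CA*CA*)`. -/
noncomputable def kerIplusCAstarCAstar (C : Conjugation H) (A : H →ₗ.[ℂ] H) : Set H :=
  {g | ∃ hg : g ∈ (A†).domain, ∃ h2 : A† ⟨g, hg⟩ ∈ (C.conjOp (A†)).domain,
      g + (C.conjOp (A†)) ⟨A† ⟨g, hg⟩, h2⟩ = 0}

/-- The kernel `N(I + A*B*)` where `B = CAC`. -/
noncomputable def kerIplusAstarBstar (C : Conjugation H) (A : H →ₗ.[ℂ] H) : Set H :=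
  {g | ∃ hg : g ∈ ((C.conjOp A)†).domain, ∃ h2 : (C.conjOp A)† ⟨g, hg⟩ ∈ (A†).domain,
      g + A† ⟨(C.conjOp A)† ⟨g, hg⟩, h2⟩ = 0}

open scoped InnerProductSpace in
/-- The orthogonal complement of `S` within `W`, with respect to the graph inner
product `⟪f, g⟫ + ⟪Tf, Tg⟫` of `T`. -/
def graphOrthComplIn (T : H →ₗ.[ℂ] H) (W S : Set H) : Set H :=
  {g | g ∈ W ∧ ∃ hg : g ∈ T.domain, ∀ f ∈ S, ∀ hf : f ∈ T.domain,
      ⟪f, g⟫_ℂ + ⟪T ⟨f, hf⟩, T ⟨g, hg⟩⟫_ℂ = 0}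

/-- The deficiency space `N(T* - μ)`. -/
noncomputable def defectSpace (T : H →ₗ.[ℂ] H) (μ : ℂ) : Submodule ℂ H where
  carrier := {z | ∃ hz : z ∈ (T†).domain, T† ⟨z, hz⟩ = μ • z}
  add_mem' := by
    rintro a b ⟨ha, hva⟩ ⟨hb, hvb⟩
    refine ⟨(T†).domain.add_mem ha hb, ?_⟩
    have h : (⟨a + b, (T†).domain.add_mem ha hb⟩ : (T†).domain) = ⟨a, ha⟩ + ⟨b, hb⟩ := rfl
    rw [h, LinearPMap.map_add, hva, hvb, smul_add]
  zero_mem' := by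
    refine ⟨(T†).domain.zero_mem, ?_⟩
    have h : (⟨(0 : H), (T†).domain.zero_mem⟩ : (T†).domain) = 0 := rfl
    rw [h, LinearPMap.map_zero, smul_zero]
  smul_mem' := by
    rintro c a ⟨ha, hva⟩
    refine ⟨(T†).domain.smul_mem c ha, ?_⟩
    have h : (⟨c • a, (T†).domain.smul_mem c ha⟩ : (T†).domain) = c • ⟨a, ha⟩ := rfl
    rw [h, LinearPMap.map_smul, hva, smul_comm]



section AuxQuot
open Submodule

section Gen
universe u
variable {M M' : Type u} [AddCommGroup M] [Module ℂ M] [AddCommGroup M'] [Module ℂ M']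

lemma aux_rank_quot_map (p q : Submodule ℂ M) (hpq : p ≤ q) (e : M ≃ₗ[ℂ] M') :
    Module.rank ℂ (↥q ⧸ Submodule.comap q.subtype p)
      = Module.rank ℂ (↥(q.map e.toLinearMap) ⧸ Submodule.comap (q.map e.toLinearMap).subtype (p.map e.toLinearMap)) := by
  refine (Submodule.Quotient.equiv _ _ (e.submoduleMap q) ?_).rank_eq
  ext z
  simp only [Submodule.mem_map, Submodule.mem_comap, Submodule.coe_subtype]
  constructor
  · rintro ⟨⟨y, hyq⟩, hyp, rfl⟩
    exact ⟨y, hyp, rfl⟩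
  · rintro ⟨y, hyp, hey⟩
    exact ⟨⟨y, hpq hyp⟩, hyp, Subtype.ext (by simpa using hey)⟩

end Gen

section Hilb
variable {K : Type*} [NormedAddCommGroup K] [InnerProductSpace ℂ K] [CompleteSpace K]

lemma aux_rank_quot_orth {M N : Submodule ℂ K} (h : M ≤ N)
    (hM : IsClosed (M : Set K)) (hN : IsClosed (N : Set K)) :
    Module.rank ℂ (↥N ⧸ Submodule.comap N.subtype M) = Module.rank ℂ ↥(Mᗮ ⊓ N) := by
  haveI : CompleteSpace ↥N := hN.completeSpace_coe
  set M' : Submodule ℂ ↥N := Submodule.comap N.subtype M with hM'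
  haveI : CompleteSpace ↥M' := by
    have hc : IsClosed (M' : Set ↥N) := hM.preimage continuous_subtype_val
    exact hc.completeSpace_coe
  have hc : IsCompl M' M'ᗮ := Submodule.isCompl_orthogonal_of_hasOrthogonalProjection
  have key : ∀ z : ↥(M'ᗮ), ((z : ↥N) : K) ∈ Mᗮ ⊓ N := by
    rintro ⟨⟨x, hxN⟩, hxo⟩
    refine Submodule.mem_inf.mpr ⟨?_, hxN⟩
    rw [Submodule.mem_orthogonal]
    intro u hu
    have := (Submodule.mem_orthogonal _ _).1 hxo ⟨u, h hu⟩ hu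
    simpa [Submodule.coe_inner] using this
  have key2 : ∀ w : ↥(Mᗮ ⊓ N), (⟨(w : K), w.2.2⟩ : ↥N) ∈ M'ᗮ := by
    rintro ⟨x, hx⟩
    rw [Submodule.mem_orthogonal]
    rintro ⟨u, huN⟩ hu
    have hu' : u ∈ M := hu
    have := (Submodule.mem_orthogonal _ _).1 hx.1 u hu'
    simpa [Submodule.coe_inner] using this
  have e2 : ↥(M'ᗮ) ≃ₗ[ℂ] ↥(Mᗮ ⊓ N) :=
    { toFun := fun z => ⟨((z : ↥N) : K), key z⟩
      invFun := fun w => ⟨⟨(w : K), w.2.2⟩, key2 w⟩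
      map_add' := fun a b => Subtype.ext rfl
      map_smul' := fun c a => Subtype.ext rfl
      left_inv := fun z => Subtype.ext (Subtype.ext rfl)
      right_inv := fun w => Subtype.ext rfl }
  exact ((Submodule.quotientEquivOfIsCompl M' M'ᗮ hc).trans e2).rank_eq

lemma aux_rank_quot_eq_orth_quot {M N : Submodule ℂ K} (h : M ≤ N)
    (hM : IsClosed (M : Set K)) (hN : IsClosed (N : Set K)) :
    Module.rank ℂ (↥N ⧸ Submodule.comap N.subtype M)
      = Module.rank ℂ (↥Mᗮ ⧸ Submodule.comap Mᗮ.subtype Nᗮ) := by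
  haveI : CompleteSpace ↥N := hN.completeSpace_coe
  rw [aux_rank_quot_orth h hM hN,
    aux_rank_quot_orth (Submodule.orthogonal_le h) N.isClosed_orthogonal M.isClosed_orthogonal,
    Submodule.orthogonal_orthogonal N, inf_comm]

end Hilb

section Graph
variable {H : Type*} [NormedAddCommGroup H] [InnerProductSpace ℂ H]

lemma aux_rank_quot_graph (S T : H →ₗ.[ℂ] H) (h : S ≤ T) :
    Module.rank ℂ (↥T.domain ⧸ Submodule.comap T.domain.subtype S.domain)
      = Module.rank ℂ (↥T.graph ⧸ Submodule.comap T.graph.subtype S.graph) := by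
  let f : ↥T.domain →ₗ[ℂ] ↥T.graph :=
    { toFun := fun x => ⟨((x : H), T x), T.mem_graph x⟩
      map_add' := fun x y => Subtype.ext (by simp [Prod.ext_iff, T.map_add])
      map_smul' := fun c x => Subtype.ext (by simp [Prod.ext_iff, T.map_smul]) }
  have hbij : Function.Bijective f := by
    constructor
    · intro a b hab
      apply Subtype.ext
      have : ((a : H), T a) = ((b : H), T b) := congrArg Subtype.val hab
      exact (Prod.ext_iff.mp this).1
    · intro z
      obtain ⟨y, hy⟩ := T.mem_graph_iff'.mp z.2
      exact ⟨y, Subtype.ext hy⟩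
  let e := LinearEquiv.ofBijective f hbij
  refine (Submodule.Quotient.equiv _ _ e ?_).rank_eq
  ext z
  simp only [Submodule.mem_map, Submodule.mem_comap, Submodule.coe_subtype]
  constructor
  · rintro ⟨x, hx, rfl⟩
    have hmem := S.mem_graph ⟨(x : H), hx⟩
    have hval : S ⟨(x : H), hx⟩ = T x := h.2 rfl
    rw [hval] at hmem
    exact hmem
  · intro hz
    obtain ⟨u, hu⟩ := T.mem_graph_iff'.mp z.2
    refine ⟨u, ?_, Subtype.ext hu⟩
    exact LinearPMap.mem_domain_iff.mpr ⟨T u, by rw [hu]; exact hz⟩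

end Graph


section MapEquiv
variable {K K' : Type*} [AddCommGroup K] [Module ℂ K] [AddCommGroup K'] [Module ℂ K']

lemma aux_mem_map_equiv (e : K ≃ₗ[ℂ] K') (p : Submodule ℂ K) (x : K') :
    x ∈ p.map e.toLinearMap ↔ e.symm x ∈ p := by
  constructor
  · rintro ⟨y, hy, rfl⟩; simpa using hy
  · intro h; exact ⟨e.symm x, h, by simp⟩

end MapEquiv

section WithLpStuff
variable {H : Type*} [NormedAddCommGroup H] [InnerProductSpace ℂ H]

/-- The symplectic rotation `(x, y) ↦ (-y, x)` on `H ×₂ H`. -/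
noncomputable def auxJ : WithLp 2 (H × H) ≃ₗ[ℂ] WithLp 2 (H × H) where
  toFun z := (WithLp.linearEquiv 2 ℂ (H × H)).symm
      (-(WithLp.linearEquiv 2 ℂ (H × H) z).2, (WithLp.linearEquiv 2 ℂ (H × H) z).1)
  invFun z := (WithLp.linearEquiv 2 ℂ (H × H)).symm
      ((WithLp.linearEquiv 2 ℂ (H × H) z).2, -(WithLp.linearEquiv 2 ℂ (H × H) z).1)
  map_add' a b := by
    simp only [_root_.map_add, Prod.fst_add, Prod.snd_add, neg_add]
    rw [← _root_.map_add, Prod.mk_add_mk]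
  map_smul' c a := by
    simp only [_root_.map_smul, Prod.smul_fst, Prod.smul_snd, RingHom.id_apply]
    rw [← _root_.map_smul, Prod.smul_mk, smul_neg]
  left_inv z := by
    simp only [LinearEquiv.apply_symm_apply, neg_neg, Prod.mk.eta, LinearEquiv.symm_apply_apply]
  right_inv z := by
    simp only [LinearEquiv.apply_symm_apply, neg_neg, Prod.mk.eta, LinearEquiv.symm_apply_apply]

lemma auxJ_apply (z : WithLp 2 (H × H)) :
    auxJ z = (WithLp.linearEquiv 2 ℂ (H × H)).symm
      (-(WithLp.linearEquiv 2 ℂ (H × H) z).2, (WithLp.linearEquiv 2 ℂ (H × H) z).1) := rfl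

lemma auxJ_symm_apply (z : WithLp 2 (H × H)) :
    auxJ.symm z = (WithLp.linearEquiv 2 ℂ (H × H)).symm
      ((WithLp.linearEquiv 2 ℂ (H × H) z).2, -(WithLp.linearEquiv 2 ℂ (H × H) z).1) := rfl

lemma aux_P_fst (x : WithLp 2 (H × H)) : (WithLp.linearEquiv 2 ℂ (H × H) x).1 = x.fst := rfl

lemma aux_P_snd (x : WithLp 2 (H × H)) : (WithLp.linearEquiv 2 ℂ (H × H) x).2 = x.snd := rfl

lemma aux_inner_symmP (x y : H × H) :
    ⟪(WithLp.linearEquiv 2 ℂ (H × H)).symm x, (WithLp.linearEquiv 2 ℂ (H × H)).symm y⟫_ℂ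
      = ⟪x.1, y.1⟫_ℂ + ⟪x.2, y.2⟫_ℂ := by
  rw [WithLp.prod_inner_apply]
  simp [WithLp.linearEquiv]

lemma aux_inner_J (x y : WithLp 2 (H × H)) : ⟪auxJ x, auxJ y⟫_ℂ = ⟪x, y⟫_ℂ := by
  rw [auxJ_apply, auxJ_apply, aux_inner_symmP, WithLp.prod_inner_apply]
  simp only [inner_neg_neg, aux_P_fst, aux_P_snd]
  change ⟪x.snd, y.snd⟫_ℂ + ⟪x.fst, y.fst⟫_ℂ = ⟪x.fst, y.fst⟫_ℂ + ⟪x.snd, y.snd⟫_ℂ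
  ring

lemma aux_contJ_symm : Continuous (⇑(auxJ (H := H)).symm) := by
  have h : ⇑(auxJ (H := H)).symm = (WithLp.equiv 2 (H × H)).symm ∘
      (fun w : H × H => (w.2, -w.1)) ∘ (WithLp.equiv 2 (H × H)) := by
    funext z; rfl
  rw [h]
  exact (WithLp.prod_continuous_toLp _ _ _).comp
    ((continuous_snd.prodMk continuous_fst.neg).comp (WithLp.prod_continuous_ofLp _ _ _))

/-- Orthogonal complement commutes with an inner-product preserving equiv. -/
lemma aux_orth_map {K : Type*} [NormedAddCommGroup K] [InnerProductSpace ℂ K]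
    (e : K ≃ₗ[ℂ] K) (he : ∀ x y, ⟪e x, e y⟫_ℂ = ⟪x, y⟫_ℂ) (p : Submodule ℂ K) :
    (p.map e.toLinearMap)ᗮ = pᗮ.map e.toLinearMap := by
  ext x
  rw [aux_mem_map_equiv]
  rw [Submodule.mem_orthogonal, Submodule.mem_orthogonal]
  constructor
  · intro hx u hu
    have h1 := hx (e u) ⟨u, hu, rfl⟩
    have h2 : ⟪e u, e (e.symm x)⟫_ℂ = ⟪u, e.symm x⟫_ℂ := he u (e.symm x)
    rw [e.apply_symm_apply] at h2
    rw [← h2]; exact h1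
  · intro hx u hu
    obtain ⟨v, hv, rfl⟩ := hu
    calc ⟪e v, x⟫_ℂ = ⟪e v, e (e.symm x)⟫_ℂ := by rw [e.apply_symm_apply]
      _ = ⟪v, e.symm x⟫_ℂ := he _ _
      _ = 0 := hx v hv

/-- The graph of `T`, living inside `H ×₂ H`. -/
noncomputable def auxGK (T : H →ₗ.[ℂ] H) : Submodule ℂ (WithLp 2 (H × H)) :=
  T.graph.map (WithLp.linearEquiv 2 ℂ (H × H)).symm.toLinearMap

lemma mem_auxGK {T : H →ₗ.[ℂ] H} {z : WithLp 2 (H × H)} :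
    z ∈ auxGK T ↔ (WithLp.linearEquiv 2 ℂ (H × H)) z ∈ T.graph := by
  rw [auxGK, aux_mem_map_equiv]
  rw [LinearEquiv.symm_symm]

variable [CompleteSpace H]

lemma aux_mem_orth_mapJ (T : H →ₗ.[ℂ] H) (z : WithLp 2 (H × H)) :
    z ∈ ((auxGK T).map auxJ.toLinearMap)ᗮ ↔ ∀ x : T.domain,
      ⟪(x : H), (WithLp.linearEquiv 2 ℂ (H × H) z).2⟫_ℂ
        = ⟪T x, (WithLp.linearEquiv 2 ℂ (H × H) z).1⟫_ℂ := by
  set P := WithLp.linearEquiv 2 ℂ (H × H) with hP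
  have hz : z = P.symm (P z) := (P.symm_apply_apply z).symm
  rw [Submodule.mem_orthogonal]
  constructor
  · intro hmem x
    have hg : P.symm ((x : H), T x) ∈ auxGK T := by
      rw [mem_auxGK]
      simpa [← hP] using T.mem_graph x
    have h0 := hmem (auxJ (P.symm ((x : H), T x))) ⟨_, hg, rfl⟩
    rw [auxJ_apply] at h0
    rw [hz, P.apply_symm_apply, aux_inner_symmP] at h0
    simp only [inner_neg_left] at h0
    linear_combination h0
  · rintro hcond u ⟨w, hw, rfl⟩
    have hw' : w ∈ auxGK T := hw
    rw [mem_auxGK] at hw'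
    obtain ⟨x, hx⟩ := T.mem_graph_iff'.mp hw'
    have hw2 : w = P.symm ((x : H), T x) := by
      rw [hx]; exact (P.symm_apply_apply w).symm
    rw [hw2, LinearEquiv.coe_coe, auxJ_apply, hz, P.apply_symm_apply, aux_inner_symmP]
    simp only [inner_neg_left]
    linear_combination (hcond x)

lemma aux_graphK_adjoint (T : H →ₗ.[ℂ] H) (hT : Dense (T.domain : Set H)) :
    auxGK (T†) = ((auxGK T).map auxJ.toLinearMap)ᗮ := by
  ext z
  rw [aux_mem_orth_mapJ, mem_auxGK, LinearPMap.mem_graph_iff]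
  set P := WithLp.linearEquiv 2 ℂ (H × H) with hP
  constructor
  · rintro ⟨v, hv1, hv2⟩ x
    rw [← hv1, ← hv2]
    have h1 := (T.adjoint_isFormalAdjoint hT) v x
    calc ⟪(x : H), T† v⟫_ℂ = (starRingEnd ℂ) ⟪T† v, (x : H)⟫_ℂ := (inner_conj_symm _ _).symm
      _ = (starRingEnd ℂ) ⟪(v : H), T x⟫_ℂ := by rw [h1]
      _ = ⟪T x, (v : H)⟫_ℂ := inner_conj_symm _ _
  · intro hcond
    have hkey : ∀ x : T.domain, ⟪(P z).2, (x : H)⟫_ℂ = ⟪(P z).1, T x⟫_ℂ := by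
      intro x
      calc ⟪(P z).2, (x : H)⟫_ℂ = (starRingEnd ℂ) ⟪(x : H), (P z).2⟫_ℂ :=
            (inner_conj_symm _ _).symm
        _ = (starRingEnd ℂ) ⟪T x, (P z).1⟫_ℂ := by rw [hcond x]
        _ = ⟪(P z).1, T x⟫_ℂ := inner_conj_symm _ _
    have hdom : (P z).1 ∈ (T†).domain :=
      T.mem_adjoint_domain_of_exists _ ⟨(P z).2, hkey⟩
    exact ⟨⟨(P z).1, hdom⟩, rfl, T.adjoint_apply_eq hT _ hkey⟩

lemma aux_isClosed_GK {T : H →ₗ.[ℂ] H} (h : _root_.IsClosed (T.graph : Set (H × H))) :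
    _root_.IsClosed ((auxGK T : Set (WithLp 2 (H × H)))) := by
  have heq : (auxGK T : Set (WithLp 2 (H × H)))
      = (WithLp.equiv 2 (H × H)) ⁻¹' (T.graph : Set (H × H)) := by
    ext z
    rw [SetLike.mem_coe, mem_auxGK]
    rfl
  rw [heq]
  exact h.preimage (WithLp.prod_continuous_ofLp _ _ _)

lemma aux_isClosed_graph_of_GK {T : H →ₗ.[ℂ] H}
    (h : _root_.IsClosed ((auxGK T : Set (WithLp 2 (H × H))))) :
    _root_.IsClosed (T.graph : Set (H × H)) := by
  have heq : (T.graph : Set (H × H))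
      = (WithLp.equiv 2 (H × H)).symm ⁻¹' (auxGK T : Set (WithLp 2 (H × H))) := by
    ext w
    rw [Set.mem_preimage, SetLike.mem_coe, SetLike.mem_coe, mem_auxGK]
    rfl
  rw [heq]
  exact h.preimage (WithLp.prod_continuous_toLp _ _ _)

lemma aux_isClosed_mapJ {p : Submodule ℂ (WithLp 2 (H × H))} (h : _root_.IsClosed (p : Set (WithLp 2 (H × H)))) :
    _root_.IsClosed ((p.map (auxJ (H := H)).toLinearMap : Set (WithLp 2 (H × H)))) := by
  have heq : (p.map (auxJ (H := H)).toLinearMap : Set (WithLp 2 (H × H))) = ⇑(auxJ (H := H)).symm ⁻¹' p := by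
    ext z
    rw [SetLike.mem_coe, aux_mem_map_equiv, Set.mem_preimage, SetLike.mem_coe]
  rw [heq]
  exact h.preimage aux_contJ_symm

end WithLpStuff

namespace Conjugation

lemma mem_conjDomain_iff (C : Conjugation H) {D : Submodule ℂ H} {x : H} :
    x ∈ C.conjDomain D ↔ ∃ y ∈ D, C y = x := Iff.rfl

lemma conj_mem_conjDomain (C : Conjugation H) {D : Submodule ℂ H} {x : H} (hx : x ∈ D) :
    C x ∈ C.conjDomain D := ⟨x, hx, rfl⟩

lemma mem_conjDomain_iff' (C : Conjugation H) {D : Submodule ℂ H} {x : H} :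
    x ∈ C.conjDomain D ↔ C x ∈ D := by
  constructor
  · exact fun h => C.conj_mem h
  · intro h
    have := C.conj_mem_conjDomain h
    rwa [C.invol] at this

lemma conjDomain_conjDomain (C : Conjugation H) (D : Submodule ℂ H) :
    C.conjDomain (C.conjDomain D) = D := by
  ext x
  rw [C.mem_conjDomain_iff', C.mem_conjDomain_iff']
  rw [C.invol]

lemma map_neg (C : Conjugation H) (x : H) : C (-x) = -C x := by
  have := C.map_smulc (-1) x
  simpa using this

lemma map_sub (C : Conjugation H) (x y : H) : C (x - y) = C x - C y := by
  rw [sub_eq_add_neg, C.map_add', C.map_neg, sub_eq_add_neg]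

lemma norm_map (C : Conjugation H) (x : H) : ‖C x‖ = ‖x‖ := by
  have h := C.inner_conj x x
  rw [norm_eq_sqrt_re_inner (𝕜 := ℂ) (C x), norm_eq_sqrt_re_inner (𝕜 := ℂ) x, h]

lemma continuous (C : Conjugation H) : Continuous C.toFun := by
  have : Isometry C.toFun := by
    apply Isometry.of_dist_eq
    intro x y
    rw [dist_eq_norm, dist_eq_norm, ← C.map_sub, C.norm_map]
  exact this.continuous

lemma graph_conjOp (C : Conjugation H) (T : H →ₗ.[ℂ] H) :
    ((C.conjOp T).graph : Set (H × H))
      = (fun w : H × H => (C w.1, C w.2)) '' (T.graph : Set (H × H)) := by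
  ext w
  simp only [Set.mem_image, SetLike.mem_coe, LinearPMap.mem_graph_iff]
  constructor
  · rintro ⟨y, hy1, hy2⟩
    have hy2' : C (T ⟨C (y : H), C.conj_mem y.2⟩) = w.2 := hy2
    have hdom : C w.1 ∈ T.domain := by rw [← hy1]; exact C.conj_mem y.2
    refine ⟨(C w.1, T ⟨C w.1, hdom⟩), ⟨⟨C w.1, hdom⟩, rfl, rfl⟩, ?_⟩
    have h1 : C (C w.1) = w.1 := C.invol w.1
    have h2 : C (T ⟨C w.1, hdom⟩) = w.2 := by
      rw [← hy2']
      congr 1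
      congr 1
      apply Subtype.ext
      simp [← hy1]
    exact Prod.ext h1 h2
  · rintro ⟨g, ⟨u, hu1, hu2⟩, rfl⟩
    have hdom : g.1 ∈ T.domain := by rw [← hu1]; exact u.2
    have hmem : C g.1 ∈ C.conjDomain T.domain := C.conj_mem_conjDomain hdom
    refine ⟨⟨C g.1, hmem⟩, rfl, ?_⟩
    show C (T ⟨C (C g.1), _⟩) = C g.2
    congr 1
    rw [← hu2]
    congr 1
    apply Subtype.ext
    simp [C.invol, ← hu1]

lemma isClosed_graph_of_conjOp (C : Conjugation H) {T : H →ₗ.[ℂ] H}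
    (h : _root_.IsClosed (((C.conjOp T).graph : Set (H × H)))) :
    _root_.IsClosed ((T.graph : Set (H × H))) := by
  have hΦ : Continuous (fun w : H × H => (C w.1, C w.2)) :=
    (C.continuous.comp continuous_fst).prodMk (C.continuous.comp continuous_snd)
  have him : (T.graph : Set (H × H))
      = (fun w : H × H => (C w.1, C w.2)) ⁻¹' ((C.conjOp T).graph : Set (H × H)) := by
    rw [C.graph_conjOp]
    ext w
    simp only [Set.mem_preimage, Set.mem_image, SetLike.mem_coe]
    constructor
    · intro hw
      exact ⟨w, hw, rfl⟩
    · rintro ⟨u, hu, heq⟩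
      have h1 : C (C u.1) = C (C w.1) := congrArg (fun p => C.toFun p.1) heq
      have h2 : C (C u.2) = C (C w.2) := congrArg (fun p => C.toFun p.2) heq
      rw [C.invol, C.invol] at h1
      rw [C.invol, C.invol] at h2
      have : u = w := Prod.ext h1 h2
      rwa [← this]
  rw [him]
  exact h.preimage hΦ

end Conjugation

/-- Transfer of quotient rank along a conjugation. -/
lemma aux_rank_conj (C : Conjugation H) (D E : Submodule ℂ H) :
    Module.rank ℂ
        (↥(C.conjDomain D) ⧸ Submodule.comap (C.conjDomain D).subtype (C.conjDomain E))
      = Module.rank ℂ (↥D ⧸ Submodule.comap D.subtype E) := by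
  let f : ↥(C.conjDomain D) →ₛₗ[starRingEnd ℂ] ↥D :=
    { toFun := fun x => ⟨C (x : H), C.conj_mem x.2⟩
      map_add' := fun x y => Subtype.ext (C.map_add' _ _)
      map_smul' := fun c x => Subtype.ext (C.map_smulc _ _) }
  let g : ↥D →ₛₗ[starRingEnd ℂ] ↥(C.conjDomain D) :=
    { toFun := fun x => ⟨C (x : H), C.conj_mem_conjDomain x.2⟩
      map_add' := fun x y => Subtype.ext (C.map_add' _ _)
      map_smul' := fun c x => Subtype.ext (C.map_smulc _ _) }
  have hf : Submodule.comap (C.conjDomain D).subtype (C.conjDomain E)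
      ≤ Submodule.comap f (Submodule.comap D.subtype E) := by
    intro x hx
    exact C.conj_mem hx
  have hg : Submodule.comap D.subtype E
      ≤ Submodule.comap g (Submodule.comap (C.conjDomain D).subtype (C.conjDomain E)) := by
    intro x hx
    exact C.conj_mem_conjDomain hx
  let F := Submodule.mapQ _ _ f hf
  let G := Submodule.mapQ _ _ g hg
  have hGF : ∀ a, G (F a) = a := by
    intro a
    obtain ⟨x, rfl⟩ := Submodule.Quotient.mk_surjective _ a
    rw [Submodule.mapQ_apply, Submodule.mapQ_apply]
    congr 1
    apply Subtype.ext
    exact C.invol _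
  have hFG : ∀ a, F (G a) = a := by
    intro a
    obtain ⟨x, rfl⟩ := Submodule.Quotient.mk_surjective _ a
    rw [Submodule.mapQ_apply, Submodule.mapQ_apply]
    congr 1
    apply Subtype.ext
    exact C.invol _
  let j : (↥(C.conjDomain D) ⧸ Submodule.comap (C.conjDomain D).subtype (C.conjDomain E)) ≃+
      (↥D ⧸ Submodule.comap D.subtype E) :=
    { toFun := F
      invFun := G
      left_inv := hGF
      right_inv := hFG
      map_add' := F.map_add }
  refine rank_eq_of_equiv_equiv (ZeroHom.mk (starRingEnd ℂ) (map_zero _)) j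
    (Function.Involutive.bijective (fun z => Complex.conj_conj z)) ?_
  intro r m
  exact F.map_smulₛₗ r m

end AuxQuot

theorem stmt_10 (C : Conjugation H) (A Atil : H →ₗ.[ℂ] H) (hA : Dense (A.domain : Set H))
    (hclosedA : A.IsClosed) (hsym : C.IsCSymmetric A)
    (hext : A ≤ Atil) (hsa : C.IsCSelfAdjoint Atil) :
    Module.rank ℂ
        (↥(C.conjOp (A†)).domain ⧸ Submodule.comap (C.conjOp (A†)).domain.subtype Atil.domain)
      = Module.rank ℂ (↥Atil.domain ⧸ Submodule.comap Atil.domain.subtype A.domain) := by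
  classical
  have hsubA : (A.domain : Set H) ⊆ Atil.domain := hext.1
  have hDenseAt : Dense (Atil.domain : Set H) := hA.mono hsubA
  -- `Ã† ≤ A†`
  have hFA : A.IsFormalAdjoint (Atil†) := by
    intro x y
    have h1 := (Atil.adjoint_isFormalAdjoint hDenseAt) y ⟨(x : H), hext.1 x.2⟩
    have h2 : Atil ⟨(x : H), hext.1 x.2⟩ = A x := (hext.2 rfl).symm
    rw [h2] at h1
    calc ⟪A x, (y : H)⟫_ℂ = (starRingEnd ℂ) ⟪(y : H), A x⟫_ℂ := (inner_conj_symm _ _).symm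
      _ = (starRingEnd ℂ) ⟪Atil† y, (x : H)⟫_ℂ := by rw [h1]
      _ = ⟪(x : H), Atil† y⟫_ℂ := inner_conj_symm _ _
  have hleAdj : Atil† ≤ A† := hFA.le_adjoint hA
  -- the domain of `Ã` is `C` applied to the domain of `Ã†`
  have hdomAt : C.conjDomain ((Atil†).domain) = Atil.domain := by
    have h1 : (C.conjOp Atil).domain = (Atil†).domain := congrArg LinearPMap.domain hsa
    have h2 : (C.conjOp Atil).domain = C.conjDomain Atil.domain := rfl
    rw [h2] at h1
    rw [← h1, C.conjDomain_conjDomain]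
  -- closedness facts
  have hGKA : auxGK (A†) = ((auxGK A).map auxJ.toLinearMap)ᗮ := aux_graphK_adjoint A hA
  have hGKAt : auxGK (Atil†) = ((auxGK Atil).map auxJ.toLinearMap)ᗮ := aux_graphK_adjoint Atil hDenseAt
  have hclosedGadjAt : _root_.IsClosed ((auxGK (Atil†) : Set (WithLp 2 (H × H)))) := by
    rw [hGKAt]
    exact Submodule.isClosed_orthogonal _
  have hclosedGraphAdjAt : _root_.IsClosed (((Atil†).graph : Set (H × H))) :=
    aux_isClosed_graph_of_GK hclosedGadjAt
  have hclosedGraphAt : _root_.IsClosed ((Atil.graph : Set (H × H))) := by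
    apply C.isClosed_graph_of_conjOp
    rw [hsa]
    exact hclosedGraphAdjAt
  have hclosedGA : _root_.IsClosed ((A.graph : Set (H × H))) := hclosedA
  -- step 1 : use `C` to pass to the quotient `D(A†)/D(Ã†)`
  have step1 : Module.rank ℂ
        (↥(C.conjOp (A†)).domain ⧸ Submodule.comap (C.conjOp (A†)).domain.subtype Atil.domain)
      = Module.rank ℂ (↥(A†).domain ⧸ Submodule.comap (A†).domain.subtype ((Atil†).domain)) := by
    have heq : (Submodule.comap (C.conjOp (A†)).domain.subtype Atil.domain)
        = Submodule.comap (C.conjDomain ((A†).domain)).subtype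
            (C.conjDomain ((Atil†).domain)) := by
      rw [hdomAt]; rfl
    rw [heq]
    exact aux_rank_conj C ((A†).domain) ((Atil†).domain)
  -- step 2 : pass to graphs
  have step2 := aux_rank_quot_graph (Atil†) (A†) hleAdj
  -- step 3 : move the graphs into `H ×₂ H`
  have step3 : Module.rank ℂ
        (↥(A†).graph ⧸ Submodule.comap (A†).graph.subtype (Atil†).graph)
      = Module.rank ℂ
        (↥(auxGK (A†)) ⧸ Submodule.comap (auxGK (A†)).subtype (auxGK (Atil†))) :=
    aux_rank_quot_map ((Atil†).graph) ((A†).graph) (LinearPMap.le_graph_of_le hleAdj)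
      (WithLp.linearEquiv 2 ℂ (H × H)).symm
  -- step 4 : rewrite adjoint graphs as orthogonal complements
  have step4 : Module.rank ℂ
        (↥(auxGK (A†)) ⧸ Submodule.comap (auxGK (A†)).subtype (auxGK (Atil†)))
      = Module.rank ℂ (↥(((auxGK A).map auxJ.toLinearMap)ᗮ) ⧸
          Submodule.comap (((auxGK A).map auxJ.toLinearMap)ᗮ).subtype (((auxGK Atil).map auxJ.toLinearMap)ᗮ)) := by
    rw [hGKA, hGKAt]
  -- step 5 : the Hilbert space core
  have hmono : auxGK A ≤ auxGK Atil := Submodule.map_mono (LinearPMap.le_graph_of_le hext)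
  have hMN : (auxGK A).map auxJ.toLinearMap ≤ (auxGK Atil).map auxJ.toLinearMap := Submodule.map_mono hmono
  have hMc : _root_.IsClosed (((auxGK A).map auxJ.toLinearMap : Set (WithLp 2 (H × H)))) :=
    aux_isClosed_mapJ (aux_isClosed_GK hclosedGA)
  have hNc : _root_.IsClosed (((auxGK Atil).map auxJ.toLinearMap : Set (WithLp 2 (H × H)))) :=
    aux_isClosed_mapJ (aux_isClosed_GK hclosedGraphAt)
  have step5 := (aux_rank_quot_eq_orth_quot hMN hMc hNc).symm
  -- step 6 : remove `auxJ`
  have step6 := (aux_rank_quot_map (auxGK A) (auxGK Atil) hmono auxJ).symm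
  -- step 7 : back from `H ×₂ H` to graphs in `H × H`
  have step7 : Module.rank ℂ
        (↥(auxGK Atil) ⧸ Submodule.comap (auxGK Atil).subtype (auxGK A))
      = Module.rank ℂ
        (↥Atil.graph ⧸ Submodule.comap Atil.graph.subtype A.graph) :=
    (aux_rank_quot_map A.graph Atil.graph (LinearPMap.le_graph_of_le hext)
      (WithLp.linearEquiv 2 ℂ (H × H)).symm).symm
  -- step 8 : back from graphs to domains
  have step8 := (aux_rank_quot_graph A Atil hext).symm
  exact step1.trans (step2.trans (step3.trans (step4.trans (step5.trans (step6.trans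
    (step7.trans step8))))))
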